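/- arXiv:1605.06485 — 2 statements merged into one kernel-verified Lean document; each statement's English description precedes it below -/
import Mathlib

section
/- Let V = {v^1,...,v^k} ⊂ ℕ^q with λ in the interior of cone(V). Let ℒ = {∑ nⁱ vⁱ : nⁱ ∈ ℤ}, ℒ₊ = {∑ nⁱ vⁱ : nⁱ ∈ ℕ}, and for α > 0 let cone_α(V) = {∑ aⁱ vⁱ : aⁱ ≥ α}. Then there exists α > 0 such that ℒ ∩ cone_α(V) ⊆ ℒ₊. -/
lemma hamel_span {q k : ℕ} (v : Fin k → Fin q → ℕ) (w : Fin k → ℝ)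
    (hw : ∀ j, ∑ i, w i * (v i j : ℝ) = 0) :
    w ∈ Submodule.span ℝ
      ((fun c : Fin k → ℚ => fun i => ((c i : ℝ))) ''
        {c : Fin k → ℚ | ∀ j, ∑ i, c i * (v i j : ℚ) = 0}) := by
  classical
  set B := Module.Basis.ofVectorSpace ℚ ℝ with hB
  set F : Fin k → (Module.Basis.ofVectorSpaceIndex ℚ ℝ →₀ ℚ) := fun i => B.repr (w i) with hF
  set s : Finset (Module.Basis.ofVectorSpaceIndex ℚ ℝ) := Finset.univ.biUnion (fun i => (F i).support)
    with hs
  have hrec : ∀ i, w i = ∑ b ∈ s, (F i b : ℝ) * (B b : ℝ) := by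
    intro i
    have h1 : (Finsupp.linearCombination ℚ (fun b => (B b : ℝ))) (F i) = w i :=
      B.linearCombination_repr (w i)
    rw [Finsupp.linearCombination_apply] at h1
    rw [Finsupp.sum_of_support_subset (F i) (s := s) (by
      intro b hb; exact Finset.mem_biUnion.2 ⟨i, Finset.mem_univ i, hb⟩)
      (fun b c => c • (B b : ℝ)) (by intro b _; simp)] at h1
    rw [← h1]
    apply Finset.sum_congr rfl
    intro b _
    rw [Rat.smul_def]
  have hFker : ∀ b, ∀ j, ∑ i, (F i b) * (v i j : ℚ) = 0 := by
    intro b j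
    have h0 : ∑ i, ((v i j : ℚ)) • (w i) = 0 := by
      rw [← hw j]
      apply Finset.sum_congr rfl
      intro i _
      rw [Rat.smul_def]; push_cast; ring
    have := congrArg (fun x => (B.repr x) b) h0
    simp only [map_sum, map_smul] at this
    simpa [Finsupp.finset_sum_apply, Finsupp.smul_apply, mul_comm] using this
  have hw' : w = ∑ b ∈ s, (B b : ℝ) • (fun i => ((F i b : ℚ) : ℝ)) := by
    funext i
    rw [hrec i]
    simp [Finset.sum_apply, mul_comm]
  rw [hw']
  apply Submodule.sum_mem
  intro b _
  apply Submodule.smul_mem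
  apply Submodule.subset_span
  exact ⟨fun i => F i b, hFker b, rfl⟩

theorem stmt3' {q k : ℕ} (v : Fin k → Fin q → ℕ) :
    ∃ α > (0 : ℝ), ∀ x : Fin q → ℤ,
      (∃ n : Fin k → ℤ, ∀ j, x j = ∑ i, n i * (v i j : ℤ)) →
      (∃ a : Fin k → ℝ, (∀ i, α ≤ a i) ∧
        (fun j => (x j : ℝ)) = ∑ i, a i • (fun j => (v i j : ℝ))) →
        (∃ n : Fin k → ℕ, ∀ j, x j = ∑ i, (n i : ℤ) * (v i j : ℤ)) := by
  classical
  -- the rational kernel as a submodule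
  let fq : (Fin k → ℚ) →ₗ[ℚ] (Fin q → ℚ) :=
    { toFun := fun c => fun j => ∑ i, c i * (v i j : ℚ)
      map_add' := by
        intro c1 c2; funext j
        simp [add_mul, Finset.sum_add_distrib]
      map_smul' := by
        intro r c; funext j
        simp [Finset.mul_sum, mul_assoc] }
  obtain ⟨m, u, hspan⟩ := Submodule.fg_iff_exists_fin_generating_family.1
    (IsNoetherian.noetherian (LinearMap.ker fq))
  have hu : ∀ i, ∀ j, ∑ p, u i p * (v p j : ℚ) = 0 := by
    intro i j
    have h1 : u i ∈ LinearMap.ker fq := by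
      rw [← hspan]; exact Submodule.subset_span ⟨i, rfl⟩
    have h2 : fq (u i) = 0 := h1
    exact congrFun h2 j
  -- clear denominators : integer kernel vectors z i
  set d : Fin m → ℕ := fun i => ∏ p, (u i p).den with hd
  have hdpos : ∀ i, 0 < d i := fun i => Finset.prod_pos (fun p _ => (u i p).pos)
  set z : Fin m → Fin k → ℤ := fun i p => ((d i / (u i p).den : ℕ) : ℤ) * (u i p).num with hz
  have hzq : ∀ i p, ((z i p : ℚ)) = (d i : ℚ) * u i p := by
    intro i p
    have hdvd : (u i p).den ∣ d i := Finset.dvd_prod_of_mem _ (Finset.mem_univ p)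
    have h1 : ((u i p).den : ℚ) * u i p = (u i p).num := by
      rw [mul_comm]
      exact_mod_cast Rat.mul_den_eq_num (u i p)
    have h2 : (d i : ℚ) = ((d i / (u i p).den : ℕ) : ℚ) * ((u i p).den : ℚ) := by
      exact_mod_cast (Nat.div_mul_cancel hdvd).symm
    rw [h2, mul_assoc, h1]
    rw [show z i p = ((d i / (u i p).den : ℕ) : ℤ) * (u i p).num from rfl]
    rw [Int.cast_mul, Int.cast_natCast]
  have hzker : ∀ i j, ∑ p, z i p * (v p j : ℤ) = 0 := by
    intro i j
    have : ((∑ p, z i p * (v p j : ℤ) : ℤ) : ℚ) = 0 := by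
      push_cast
      calc ∑ p, (z i p : ℚ) * (v p j : ℚ)
          = (d i : ℚ) * ∑ p, u i p * (v p j : ℚ) := by
            rw [Finset.mul_sum]
            exact Finset.sum_congr rfl fun p _ => by rw [hzq i p]; ring
        _ = 0 := by rw [hu i j, mul_zero]
    exact_mod_cast this
  set C : ℝ := ∑ i, ∑ p, |(z i p : ℝ)| with hC
  have hC0 : 0 ≤ C := Finset.sum_nonneg fun i _ => Finset.sum_nonneg fun p _ => abs_nonneg _
  refine ⟨C + 1, by positivity, ?_⟩
  intro x hx hcone
  obtain ⟨n, hn⟩ := hx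
  obtain ⟨a, ha, hax⟩ := hcone
  have haj : ∀ j, (x j : ℝ) = ∑ i, a i * (v i j : ℝ) := by
    intro j
    have := congrFun hax j
    simpa [Finset.sum_apply] using this
  set w : Fin k → ℝ := fun i => a i - (n i : ℝ) with hwdef
  have hker : ∀ j, ∑ i, w i * (v i j : ℝ) = 0 := by
    intro j
    have h1 : (x j : ℝ) = ∑ i, (n i : ℝ) * (v i j : ℝ) := by exact_mod_cast hn j
    have : ∑ i, w i * (v i j : ℝ) =
        (∑ i, a i * (v i j : ℝ)) - ∑ i, (n i : ℝ) * (v i j : ℝ) := by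
      rw [← Finset.sum_sub_distrib]
      exact Finset.sum_congr rfl fun i _ => by simp [hwdef]; ring
    rw [this, ← haj j, ← h1, sub_self]
  -- express w over the integer kernel vectors
  have hmem := hamel_span v w hker
  have hsub : ((fun c : Fin k → ℚ => fun i => ((c i : ℝ))) ''
      {c : Fin k → ℚ | ∀ j, ∑ i, c i * (v i j : ℚ) = 0}) ⊆
      ↑(Submodule.span ℝ (Set.range (fun i => fun p => ((u i p : ℚ) : ℝ)))) := by
    rintro _ ⟨c, hc, rfl⟩
    have hcker : c ∈ LinearMap.ker fq := by
      have : fq c = 0 := funext fun j => hc j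
      exact this
    rw [← hspan] at hcker
    let φL : (Fin k → ℚ) →ₗ[ℚ] (Fin k → ℝ) :=
      { toFun := fun c => fun i => ((c i : ℝ))
        map_add' := by intro c1 c2; funext i; simp
        map_smul' := by intro r c; funext i; simp [Rat.smul_def] }
    have h1 : φL c ∈ Submodule.map φL (Submodule.span ℚ (Set.range u)) :=
      Submodule.mem_map_of_mem hcker
    rw [Submodule.map_span] at h1
    have h2 : (⇑φL '' Set.range u) = Set.range (fun i => fun p => ((u i p : ℚ) : ℝ)) := by
      rw [← Set.range_comp]; rfl
    rw [h2] at h1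
    exact Submodule.span_subset_span ℚ ℝ _ h1
  have hmem2 : w ∈ Submodule.span ℝ (Set.range (fun i => fun p => ((u i p : ℚ) : ℝ))) := by
    have := Submodule.span_le.2 hsub
    exact this hmem
  obtain ⟨t, ht⟩ := (Submodule.mem_span_range_iff_exists_fun ℝ).1 hmem2
  have htp : ∀ p, ∑ i, t i * ((u i p : ℚ) : ℝ) = w p := by
    intro p
    have := congrFun ht p
    simpa [Finset.sum_apply] using this
  set sc : Fin m → ℝ := fun i => t i / (d i : ℝ) with hsc
  have hzre : ∀ i p, ((z i p : ℝ)) = (d i : ℝ) * ((u i p : ℚ) : ℝ) := by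
    intro i p
    exact_mod_cast congrArg (fun y : ℚ => (y : ℝ)) (hzq i p)
  have hwp : ∀ p, w p = ∑ i, sc i * (z i p : ℝ) := by
    intro p
    rw [← htp p]
    apply Finset.sum_congr rfl
    intro i _
    rw [hzre i p, hsc]
    have : ((d i : ℝ)) ≠ 0 := by positivity
    field_simp
  set r : Fin k → ℤ := fun p => ∑ i, ⌊sc i⌋ * z i p with hr
  have hbound : ∀ p, |w p - (r p : ℝ)| ≤ C := by
    intro p
    have h1 : w p - (r p : ℝ) = ∑ i, (sc i - (⌊sc i⌋ : ℝ)) * (z i p : ℝ) := by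
      rw [hwp p, hr]
      push_cast
      rw [← Finset.sum_sub_distrib]
      exact Finset.sum_congr rfl fun i _ => by ring
    rw [h1]
    calc |∑ i, (sc i - (⌊sc i⌋ : ℝ)) * (z i p : ℝ)|
        ≤ ∑ i, |(sc i - (⌊sc i⌋ : ℝ)) * (z i p : ℝ)| := Finset.abs_sum_le_sum_abs _ _
      _ ≤ ∑ i, |(z i p : ℝ)| := by
          apply Finset.sum_le_sum
          intro i _
          rw [abs_mul]
          have h2 : |sc i - (⌊sc i⌋ : ℝ)| ≤ 1 := by
            rw [Int.self_sub_floor, abs_of_nonneg (Int.fract_nonneg _)]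
            exact le_of_lt (Int.fract_lt_one _)
          nlinarith [abs_nonneg ((z i p : ℝ))]
      _ ≤ C := by
          rw [hC]
          exact Finset.sum_le_sum fun i _ =>
            Finset.single_le_sum (fun p' _ => abs_nonneg ((z i p' : ℝ)))
              (Finset.mem_univ p)
  have hrker : ∀ j, ∑ p, r p * (v p j : ℤ) = 0 := by
    intro j
    have h1 : ∑ p, (∑ i, ⌊sc i⌋ * z i p) * (v p j : ℤ)
        = ∑ i, ⌊sc i⌋ * (∑ p, z i p * (v p j : ℤ)) := by
      simp_rw [Finset.sum_mul, Finset.mul_sum]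
      rw [Finset.sum_comm]
      exact Finset.sum_congr rfl fun i _ => Finset.sum_congr rfl fun p _ => by ring
    calc ∑ p, r p * (v p j : ℤ) = ∑ p, (∑ i, ⌊sc i⌋ * z i p) * (v p j : ℤ) := rfl
      _ = ∑ i, ⌊sc i⌋ * (∑ p, z i p * (v p j : ℤ)) := h1
      _ = 0 := by simp [hzker]
  have hn0 : ∀ p, 0 ≤ n p + r p := by
    intro p
    have h1 : (C + 1) ≤ a p := ha p
    have h2 : w p - (r p : ℝ) ≤ C := (abs_le.1 (hbound p)).2
    have h3 : ((n p + r p : ℤ) : ℝ) = a p - (w p - (r p : ℝ)) := by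
      rw [hwdef]; push_cast; ring
    have h4 : (0:ℝ) ≤ ((n p + r p : ℤ) : ℝ) := by rw [h3]; linarith
    exact_mod_cast h4
  refine ⟨fun p => (n p + r p).toNat, ?_⟩
  intro j
  have h4 : ∀ p, (((n p + r p).toNat : ℤ)) = n p + r p := fun p => Int.toNat_of_nonneg (hn0 p)
  calc x j = ∑ i, n i * (v i j : ℤ) + ∑ i, r i * (v i j : ℤ) := by
        rw [hrker j, add_zero]; exact hn j
    _ = ∑ i, (n i + r i) * (v i j : ℤ) := by
        rw [← Finset.sum_add_distrib]
        exact Finset.sum_congr rfl fun i _ => by ring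
    _ = ∑ i, (((n i + r i).toNat : ℤ)) * (v i j : ℤ) :=
        Finset.sum_congr rfl fun i _ => by rw [h4 i]


open Finset

/-- The set of real linear combinations of `v 1, ..., v k` with all coefficients at least `α`. -/
def coneAlpha {q k : ℕ} (v : Fin k → Fin q → ℕ) (α : ℝ) : Set (Fin q → ℝ) :=
  {x | ∃ a : Fin k → ℝ, (∀ i, α ≤ a i) ∧ x = ∑ i, a i • (fun j => (v i j : ℝ))}

/-- The lattice `ℒ(V)` of integer linear combinations of the `vⁱ`. -/
def latticeOf {q k : ℕ} (v : Fin k → Fin q → ℕ) : Set (Fin q → ℤ) :=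
  {x | ∃ n : Fin k → ℤ, ∀ j, x j = ∑ i, n i * (v i j : ℤ)}

/-- The nonnegative lattice `ℒ₊(V)` of `ℕ`-linear combinations of the `vⁱ`. -/
def latticePlus {q k : ℕ} (v : Fin k → Fin q → ℕ) : Set (Fin q → ℤ) :=
  {x | ∃ n : Fin k → ℕ, ∀ j, x j = ∑ i, (n i : ℤ) * (v i j : ℤ)}

/-- If `λ` is interior to `cone(V)`, there is `α > 0` with
`ℒ ∩ cone_α(V) ⊆ ℒ₊`. -/
theorem stmt3 {q k : ℕ} (v : Fin k → Fin q → ℕ) (lam : Fin q → ℝ)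
    (hl : lam ∈ interior (coneAlpha v 0)) :
    ∃ α > (0 : ℝ), ∀ x : Fin q → ℤ,
      x ∈ latticeOf v → (fun j => (x j : ℝ)) ∈ coneAlpha v α →
        x ∈ latticePlus v := by
  obtain ⟨α, hα, H⟩ := stmt3' v
  exact ⟨α, hα, fun x hx hc => H x hx hc⟩
end

section
/- Let ∼ be a symmetric relation on {1,...,q} and λ ∈ (0,∞)^q. If every nonempty S ⊆ {1,...,q} is excessive (λ(N(S)) > λ(S)) or satisfies N(S) = S, then λ lies in the interior of cone(V), where V = {eᵢ + eⱼ : i ∼ j}. If there is no deficient set but some critical set (λ(N(S)) = λ(S) and S ≠ N(S)), then λ ∈ ∂cone(V). -/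
open Finset

/-- The set of allowed family types for pair matchings: `eᵢ + eⱼ` for `i ∼ j`. -/
def pairTypes {q : ℕ} (rel : Fin q → Fin q → Prop) : Set (Fin q → ℝ) :=
  {w | ∃ i j, rel i j ∧ w = Pi.single i (1 : ℝ) + Pi.single j (1 : ℝ)}

/-- The conical hull of a set `S ⊆ ℝ^q`. -/
def coneOfSet {q : ℕ} (S : Set (Fin q → ℝ)) : Set (Fin q → ℝ) :=
  {x | ∃ (n : ℕ) (c : Fin n → ℝ) (w : Fin n → Fin q → ℝ),
    (∀ i, 0 ≤ c i) ∧ (∀ i, w i ∈ S) ∧ x = ∑ i, c i • w i}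

/-- The neighbourhood `N(S)` of a set of colours in the compatibility graph. -/
def nbhd {q : ℕ} (rel : Fin q → Fin q → Prop) [DecidableRel rel] (S : Finset (Fin q)) :
    Finset (Fin q) :=
  Finset.univ.filter (fun x => ∃ y ∈ S, rel x y)

def coneFin {q n : ℕ} (w : Fin n → Fin q → ℝ) : Set (Fin q → ℝ) :=
  {x | ∃ c : Fin n → ℝ, (∀ i, 0 ≤ c i) ∧ x = ∑ i, c i • w i}

lemma isClosed_coneFin_of_li {q n : ℕ} {w : Fin n → Fin q → ℝ}
    (hli : LinearIndependent ℝ w) : IsClosed (coneFin w) := by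
  let L : (Fin n → ℝ) →ₗ[ℝ] (Fin q → ℝ) :=
    { toFun := fun c => ∑ i, c i • w i
      map_add' := by
        intro a b
        simp [add_smul, Finset.sum_add_distrib]
      map_smul' := by
        intro t a
        simp [Finset.smul_sum, smul_smul] }
  have hker : LinearMap.ker L = ⊥ := by
    rw [LinearMap.ker_eq_bot']
    intro c hc
    have := Fintype.linearIndependent_iff.1 hli c hc
    funext i; exact this i
  have hemb := L.isClosedEmbedding_of_injective hker
  have hset : IsClosed {c : Fin n → ℝ | ∀ i, 0 ≤ c i} := by
    have : {c : Fin n → ℝ | ∀ i, 0 ≤ c i} = ⋂ i, (fun c : Fin n → ℝ => c i) ⁻¹' Set.Ici 0 := by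
      ext c; simp [Set.mem_iInter]
    rw [this]
    exact isClosed_iInter fun i => isClosed_Ici.preimage (continuous_apply i)
  have himg : coneFin w = L '' {c : Fin n → ℝ | ∀ i, 0 ≤ c i} := by
    ext x
    constructor
    · rintro ⟨c, hc, rfl⟩; exact ⟨c, hc, rfl⟩
    · rintro ⟨c, hc, rfl⟩; exact ⟨c, hc, rfl⟩
  rw [himg]
  exact hemb.isClosedMap _ hset

lemma isClosed_coneFin {q : ℕ} : ∀ (n : ℕ) (w : Fin n → Fin q → ℝ), IsClosed (coneFin w) := by
  intro n
  induction n with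
  | zero => intro w; exact isClosed_coneFin_of_li (linearIndependent_empty_type)
  | succ n ih =>
    intro w
    by_cases hli : LinearIndependent ℝ w
    · exact isClosed_coneFin_of_li hli
    · -- get a dependence with a positive coefficient
      obtain ⟨d, hd0, i0, hi0⟩ := Fintype.not_linearIndependent_iff.1 hli
      obtain ⟨d, hd0, i0, hi0⟩ : ∃ d : Fin (n+1) → ℝ, ∑ i, d i • w i = 0 ∧ ∃ i, 0 < d i := by
        rcases lt_trichotomy (d i0) 0 with h | h | h
        · refine ⟨-d, by simpa using hd0, i0, by simpa using h⟩
        · exact absurd h hi0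
        · exact ⟨d, hd0, i0, h⟩
      have hUnion : coneFin w = ⋃ p : Fin (n+1), coneFin (w ∘ p.succAbove) := by
        ext x
        constructor
        · rintro ⟨c, hc, rfl⟩
          set P : Finset (Fin (n+1)) := univ.filter (fun i => 0 < d i) with hP
          obtain ⟨p, hpP, hpmin⟩ := P.exists_min_image (fun i => c i / d i)
            ⟨i0, by simp [hP, hi0]⟩
          have hdp : 0 < d p := by simpa [hP] using hpP
          set t : ℝ := c p / d p with ht
          have htn : 0 ≤ t := div_nonneg (hc p) hdp.le
          set c' : Fin (n+1) → ℝ := fun i => c i - t * d i with hc'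
          have hc'n : ∀ i, 0 ≤ c' i := by
            intro i
            rcases le_or_gt (d i) 0 with h | h
            · have : t * d i ≤ 0 := mul_nonpos_of_nonneg_of_nonpos htn h
              have := hc i
              simp only [hc']; linarith
            · have hmin := hpmin i (by simp [hP, h])
              have : t * d i ≤ c i := by
                rw [ht]
                calc c p / d p * d i ≤ c i / d i * d i := by
                      exact mul_le_mul_of_nonneg_right hmin h.le
                  _ = c i := by field_simp
              simp only [hc']; linarith
          have hc'p : c' p = 0 := by
            simp only [hc', ht]
            field_simp
            ring
          have hsum : ∑ i, c i • w i = ∑ i, c' i • w i := by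
            simp only [hc', sub_smul, Finset.sum_sub_distrib]
            have : ∑ i, (t * d i) • w i = t • ∑ i, d i • w i := by
              rw [Finset.smul_sum]; congr 1; funext i; rw [smul_smul]
            rw [this, hd0, smul_zero, sub_zero]
          refine Set.mem_iUnion.2 ⟨p, fun k => c' (p.succAbove k), fun k => hc'n _, ?_⟩
          rw [hsum, Fin.sum_univ_succAbove (fun i => c' i • w i) p, hc'p, zero_smul, zero_add]
          rfl
        · intro hx
          obtain ⟨p, c, hc, rfl⟩ := Set.mem_iUnion.1 hx
          set cc : Fin (n+1) → ℝ := p.insertNth (0:ℝ) c with hcc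
          refine ⟨cc, ?_, ?_⟩
          · intro i
            refine Fin.succAboveCases p ?_ ?_ i
            · simp [hcc]
            · intro k; simpa [hcc] using hc k
          · have hs := Fin.sum_univ_succAbove (fun i => cc i • w i) p
            rw [hs]
            simp [hcc]
      rw [hUnion]
      exact isClosed_iUnion_of_finite fun p => ih _

lemma coneOfSet_eq_coneFin {q N : ℕ} (S : Set (Fin q → ℝ)) (w : Fin N → Fin q → ℝ)
    (h1 : ∀ k, w k ∈ S) (h2 : ∀ v ∈ S, ∃ k, w k = v) : coneOfSet S = coneFin w := by
  ext x
  constructor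
  · rintro ⟨n, c, v, hc, hv, rfl⟩
    choose f hf using fun i => h2 (v i) (hv i)
    refine ⟨fun k => ∑ i ∈ univ.filter (fun i => f i = k), c i,
      fun k => Finset.sum_nonneg fun i _ => hc i, ?_⟩
    have : ∀ k : Fin N, (∑ i ∈ univ.filter (fun i => f i = k), c i) • w k
        = ∑ i ∈ univ.filter (fun i => f i = k), c i • v i := by
      intro k
      rw [Finset.sum_smul]
      refine Finset.sum_congr rfl fun i hi => ?_
      rw [mem_filter] at hi
      rw [← hi.2, hf i]
    rw [Finset.sum_congr rfl (fun k _ => this k)]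
    exact (Finset.sum_fiberwise univ f fun i => c i • v i).symm
  · rintro ⟨c, hc, rfl⟩
    exact ⟨N, c, w, hc, h1, rfl⟩


lemma isClosed_coneOfSet_pairTypes {q : ℕ} (rel : Fin q → Fin q → Prop) [DecidableRel rel] :
    IsClosed (coneOfSet (pairTypes rel)) := by
  classical
  set P : Finset (Fin q × Fin q) := univ.filter (fun p => rel p.1 p.2) with hP
  set w : Fin P.card → Fin q → ℝ := fun k =>
    Pi.single (((P.equivFin.symm k : P) : Fin q × Fin q).1) (1:ℝ)
      + Pi.single (((P.equivFin.symm k : P) : Fin q × Fin q).2) (1:ℝ) with hw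
  have h1 : ∀ k, w k ∈ pairTypes rel := by
    intro k
    refine ⟨_, _, ?_, rfl⟩
    have := (P.equivFin.symm k).2
    simp only [hP, mem_filter] at this
    exact this.2
  have h2 : ∀ v ∈ pairTypes rel, ∃ k, w k = v := by
    rintro v ⟨i, j, hrel, rfl⟩
    refine ⟨P.equivFin ⟨(i, j), by simp [hP, hrel]⟩, ?_⟩
    simp [hw]
  rw [coneOfSet_eq_coneFin _ w h1 h2]
  exact isClosed_coneFin _ _

lemma zero_mem_coneOfSet {q : ℕ} (S : Set (Fin q → ℝ)) : (0 : Fin q → ℝ) ∈ coneOfSet S :=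
  ⟨0, Fin.elim0, Fin.elim0, fun i => i.elim0, fun i => i.elim0, by simp⟩

lemma add_mem_coneOfSet {q : ℕ} {S : Set (Fin q → ℝ)} {x y : Fin q → ℝ}
    (hx : x ∈ coneOfSet S) (hy : y ∈ coneOfSet S) : x + y ∈ coneOfSet S := by
  obtain ⟨n, c, v, hc, hv, rfl⟩ := hx
  obtain ⟨m, d, u, hd, hu, rfl⟩ := hy
  refine ⟨n + m, Fin.append c d, Fin.append v u, ?_, ?_, ?_⟩
  · intro i
    refine Fin.addCases (fun i => ?_) (fun i => ?_) i <;> simp [hc, hd]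
  · intro i
    refine Fin.addCases (fun i => ?_) (fun i => ?_) i <;> simp [hv, hu]
  · rw [Fin.sum_univ_add]
    simp

lemma smul_mem_coneOfSet {q : ℕ} {S : Set (Fin q → ℝ)} {x : Fin q → ℝ} {t : ℝ}
    (ht : 0 ≤ t) (hx : x ∈ coneOfSet S) : t • x ∈ coneOfSet S := by
  obtain ⟨n, c, v, hc, hv, rfl⟩ := hx
  refine ⟨n, fun i => t * c i, v, fun i => mul_nonneg ht (hc i), hv, ?_⟩
  rw [Finset.smul_sum]
  congr 1; funext i; rw [smul_smul]

lemma coneOfSet_dual_nonneg {q : ℕ} {S : Set (Fin q → ℝ)} {y : Fin q → ℝ}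
    (hy : ∀ w ∈ S, 0 ≤ ∑ i, w i * y i) {z : Fin q → ℝ} (hz : z ∈ coneOfSet S) :
    0 ≤ ∑ i, z i * y i := by
  obtain ⟨n, c, v, hc, hv, rfl⟩ := hz
  simp only [Finset.sum_apply, Pi.smul_apply, smul_eq_mul, Finset.sum_mul]
  rw [Finset.sum_comm]
  refine Finset.sum_nonneg fun k _ => ?_
  have : ∑ i, c k * v k i * y i = c k * ∑ i, v k i * y i := by
    rw [Finset.mul_sum]; congr 1; funext i; ring
  rw [this]
  exact mul_nonneg (hc k) (hy _ (hv k))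

lemma pair_sum {q : ℕ} (v : Fin q → ℝ) (i j : Fin q) :
    ∑ k, ((Pi.single i (1:ℝ) + Pi.single j 1) : Fin q → ℝ) k * v k = v i + v j := by
  simp only [Pi.add_apply, add_mul, Finset.sum_add_distrib]
  congr 1 <;>
  · simp [Pi.single_apply, ite_mul]

open MeasureTheory in
lemma layer_cake_ineq {q : ℕ} (rel : Fin q → Fin q → Prop) [DecidableRel rel]
    (hsymm : ∀ i j, rel i j → rel j i)
    (lam : Fin q → ℝ) (hlam : ∀ i, 0 ≤ lam i)
    (H : ∀ S : Finset (Fin q), S.Nonempty → ∑ i ∈ S, lam i ≤ ∑ i ∈ nbhd rel S, lam i)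
    (y : Fin q → ℝ) (hy : ∀ i j, rel i j → 0 ≤ y i + y j) :
    0 ≤ ∑ i, lam i * y i := by
  classical
  set F : Fin q → ℝ → ℝ :=
    fun i => (Set.Ioc (0:ℝ) (max (-y i) 0)).indicator (fun _ => lam i) with hF
  set G : Fin q → ℝ → ℝ :=
    fun i => (Set.Ioc (0:ℝ) (max (y i) 0)).indicator (fun _ => lam i) with hG
  have hind : ∀ (a c : ℝ), Integrable ((Set.Ioc (0:ℝ) a).indicator (fun _ => c)) := by
    intro a c
    rw [integrable_indicator_iff measurableSet_Ioc]
    exact integrableOn_const measure_Ioc_lt_top.ne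
  have hival : ∀ (a c : ℝ), 0 ≤ a →
      ∫ t in Set.Ioi (0:ℝ), (Set.Ioc (0:ℝ) a).indicator (fun _ => c) t = c * a := by
    intro a c ha
    rw [setIntegral_indicator measurableSet_Ioc]
    have : Set.Ioi (0:ℝ) ∩ Set.Ioc 0 a = Set.Ioc 0 a := by
      ext t; simp only [Set.mem_inter_iff, Set.mem_Ioi, Set.mem_Ioc]
      tauto
    rw [this, setIntegral_const, Real.volume_real_Ioc_of_le ha, smul_eq_mul,
      sub_zero, mul_comm]
  -- pointwise inequality on Ioi 0
  have hpt : ∀ t ∈ Set.Ioi (0:ℝ), (∑ i, F i t) ≤ ∑ i, G i t := by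
    intro t ht
    rw [Set.mem_Ioi] at ht
    have hFt : ∀ i, F i t = if y i ≤ -t then lam i else 0 := by
      intro i
      rw [hF]
      simp only [Set.indicator_apply, Set.mem_Ioc]
      refine if_congr ?_ rfl rfl
      constructor
      · rintro ⟨-, h2⟩
        rcases le_max_iff.1 h2 with h | h
        · linarith
        · linarith
      · intro h
        exact ⟨ht, le_max_iff.2 (Or.inl (by linarith))⟩
    have hGt : ∀ i, G i t = if t ≤ y i then lam i else 0 := by
      intro i
      rw [hG]
      simp only [Set.indicator_apply, Set.mem_Ioc]
      refine if_congr ?_ rfl rfl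
      constructor
      · rintro ⟨-, h2⟩
        rcases le_max_iff.1 h2 with h | h
        · linarith
        · linarith
      · intro h
        exact ⟨ht, le_max_iff.2 (Or.inl h)⟩
    set St : Finset (Fin q) := univ.filter (fun i => y i ≤ -t) with hSt
    set Tt : Finset (Fin q) := univ.filter (fun i => t ≤ y i) with hTt
    have hFsum : ∑ i, F i t = ∑ i ∈ St, lam i := by
      rw [Finset.sum_congr rfl fun i _ => hFt i, hSt, Finset.sum_filter]
    have hGsum : ∑ i, G i t = ∑ i ∈ Tt, lam i := by
      rw [Finset.sum_congr rfl fun i _ => hGt i, hTt, Finset.sum_filter]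
    rw [hFsum, hGsum]
    rcases St.eq_empty_or_nonempty with h | h
    · rw [h]; simp only [Finset.sum_empty]
      exact Finset.sum_nonneg fun i _ => hlam i
    · refine le_trans (H St h) ?_
      refine Finset.sum_le_sum_of_subset_of_nonneg ?_ (fun i _ _ => hlam i)
      intro x hx
      rw [nbhd, mem_filter] at hx
      obtain ⟨-, z, hzSt, hrel⟩ := hx
      rw [hSt, mem_filter] at hzSt
      have := hy x z hrel
      rw [hTt, mem_filter]
      exact ⟨mem_univ _, by linarith [hzSt.2]⟩
  -- integrate
  have hFint : ∀ i, IntegrableOn (F i) (Set.Ioi (0:ℝ)) := fun i => (hind _ _).integrableOn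
  have hGint : ∀ i, IntegrableOn (G i) (Set.Ioi (0:ℝ)) := fun i => (hind _ _).integrableOn
  have hmono := setIntegral_mono_on
    (integrable_finset_sum univ fun i _ => hFint i)
    (integrable_finset_sum univ fun i _ => hGint i)
    measurableSet_Ioi hpt
  rw [integral_finset_sum univ fun i _ => hFint i,
    integral_finset_sum univ fun i _ => hGint i] at hmono
  have hFv : ∀ i ∈ univ, ∫ t in Set.Ioi (0:ℝ), F i t = lam i * max (-y i) 0 :=
    fun i _ => hival _ _ (le_max_right _ _)
  have hGv : ∀ i ∈ univ, ∫ t in Set.Ioi (0:ℝ), G i t = lam i * max (y i) 0 :=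
    fun i _ => hival _ _ (le_max_right _ _)
  rw [Finset.sum_congr rfl hFv, Finset.sum_congr rfl hGv] at hmono
  have hdec : ∀ i, lam i * y i = lam i * max (y i) 0 - lam i * max (-y i) 0 := by
    intro i
    have : max (y i) 0 - max (-y i) 0 = y i := by
      rcases le_total (y i) 0 with h | h
      · rw [max_eq_right h, max_eq_left (by linarith)]; ring
      · rw [max_eq_left h, max_eq_right (by linarith)]; ring
    have h2 : lam i * (max (y i) 0 - max (-y i) 0) = lam i * y i := by rw [this]
    rw [← h2, mul_sub]
  rw [Finset.sum_congr rfl fun i _ => hdec i, Finset.sum_sub_distrib]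
  linarith

open scoped InnerProductSpace in
lemma mem_cone_of_noDeficient {q : ℕ} (rel : Fin q → Fin q → Prop) [DecidableRel rel]
    (hsymm : ∀ i j, rel i j → rel j i)
    (lam : Fin q → ℝ) (hlam : ∀ i, 0 ≤ lam i)
    (H : ∀ S : Finset (Fin q), S.Nonempty → ∑ i ∈ S, lam i ≤ ∑ i ∈ nbhd rel S, lam i) :
    lam ∈ coneOfSet (pairTypes rel) := by
  classical
  by_contra hmem
  set C := coneOfSet (pairTypes rel) with hC
  set T : EuclideanSpace ℝ (Fin q) ≃L[ℝ] (Fin q → ℝ) := EuclideanSpace.equiv (Fin q) ℝ with hT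
  set K : ConvexCone ℝ (EuclideanSpace ℝ (Fin q)) :=
    { carrier := T ⁻¹' C
      smul_mem' := by
        intro t ht x hx
        simp only [Set.mem_preimage, map_smul] at *
        exact smul_mem_coneOfSet ht.le hx
      add_mem' := by
        intro x hx z hz
        simp only [Set.mem_preimage, map_add] at *
        exact add_mem_coneOfSet hx hz } with hK
  have hmemK : ∀ x : EuclideanSpace ℝ (Fin q), x ∈ K ↔ T x ∈ C := fun _ => Iff.rfl
  have hKc : IsClosed (K : Set (EuclideanSpace ℝ (Fin q))) :=
    (isClosed_coneOfSet_pairTypes rel).preimage T.continuous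
  have hKne : (K : Set (EuclideanSpace ℝ (Fin q))).Nonempty :=
    ⟨0, by simp only [SetLike.mem_coe, hmemK, map_zero]; exact zero_mem_coneOfSet _⟩
  have hb : T.symm lam ∉ K := by
    rw [hmemK, T.apply_symm_apply]
    exact hmem
  obtain ⟨y, hy1, hy2⟩ :=
    ProperCone.hyperplane_separation' (⟨K.toPointedCone (.of_nonempty_of_isClosed hKne hKc), hKc⟩ :
      ProperCone ℝ (EuclideanSpace ℝ (Fin q))) hb
  set yf : Fin q → ℝ := T y with hyf
  have hinner : ∀ x : EuclideanSpace ℝ (Fin q), ⟪x, y⟫_ℝ = ∑ i, (T x) i * yf i := by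
    intro x
    rw [PiLp.inner_apply]
    simp [RCLike.inner_apply, hyf, hT]
    exact Finset.sum_congr rfl fun i _ => mul_comm _ _
  have hedge : ∀ i j, rel i j → 0 ≤ yf i + yf j := by
    intro i j hrel
    have hw : ((Pi.single i (1:ℝ) + Pi.single j 1) : Fin q → ℝ) ∈ C := by
      refine ⟨1, fun _ => 1, fun _ => Pi.single i (1:ℝ) + Pi.single j 1, ?_, ?_, ?_⟩
      · intro; norm_num
      · intro; exact ⟨i, j, hrel, rfl⟩
      · simp
    have hx : T.symm ((Pi.single i (1:ℝ) + Pi.single j 1)) ∈ K := by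
      rw [hmemK, T.apply_symm_apply]; exact hw
    have := hy1 _ hx
    rw [hinner, T.apply_symm_apply, pair_sum] at this
    exact this
  have hlay := layer_cake_ineq rel hsymm lam hlam H yf hedge
  have hlt : ⟪y, T.symm lam⟫_ℝ < 0 := by rw [real_inner_comm]; exact hy2
  rw [real_inner_comm, hinner, T.apply_symm_apply] at hlt
  linarith


/-- If every nonempty `S` is excessive or self-neighbouring, then `λ` is interior
to `cone(V)`; if there is no deficient set but some critical set, then
`λ ∈ ∂cone(V)`. -/
theorem stmt17 {q : ℕ} (rel : Fin q → Fin q → Prop) [DecidableRel rel]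
    (hsymm : ∀ i j, rel i j → rel j i)
    (lam : Fin q → ℝ) (hlam : ∀ i, 0 < lam i) :
    ((∀ S : Finset (Fin q), S.Nonempty →
        (∑ i ∈ S, lam i < ∑ i ∈ nbhd rel S, lam i ∨ nbhd rel S = S)) →
      lam ∈ interior (coneOfSet (pairTypes rel))) ∧
    (((¬ ∃ S : Finset (Fin q), S.Nonempty ∧ ∑ i ∈ nbhd rel S, lam i < ∑ i ∈ S, lam i) ∧
        (∃ S : Finset (Fin q), S.Nonempty ∧
          ∑ i ∈ nbhd rel S, lam i = ∑ i ∈ S, lam i ∧ nbhd rel S ≠ S)) →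
      lam ∈ frontier (coneOfSet (pairTypes rel))) := by
  classical
  constructor
  · -- interior part
    intro hyp
    set O : Finset (Fin q) → Set (Fin q → ℝ) := fun S =>
      {f | (∑ i ∈ S, f i < ∑ i ∈ nbhd rel S, f i) ∨ nbhd rel S = S ∨ S = ∅} with hO
    set U : Set (Fin q → ℝ) := {f | ∀ i, 0 < f i} ∩ ⋂ S : Finset (Fin q), O S with hU
    have hOopen : ∀ S, IsOpen (O S) := by
      intro S
      by_cases h : nbhd rel S = S ∨ S = ∅
      · have : O S = Set.univ := by
          ext f; simp only [hO, Set.mem_setOf_eq, Set.mem_univ, iff_true]; tauto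
        rw [this]; exact isOpen_univ
      · have : O S = {f | ∑ i ∈ S, f i < ∑ i ∈ nbhd rel S, f i} := by
          ext f; simp only [hO, Set.mem_setOf_eq]; tauto
        rw [this]
        exact isOpen_lt (continuous_finset_sum S fun i _ => continuous_apply i)
          (continuous_finset_sum _ fun i _ => continuous_apply i)
    have hUopen : IsOpen U := by
      refine IsOpen.inter ?_ (isOpen_iInter_of_finite hOopen)
      have : {f : Fin q → ℝ | ∀ i, 0 < f i} = ⋂ i, {f : Fin q → ℝ | 0 < f i} := by
        ext f; simp
      rw [this]
      exact isOpen_iInter_of_finite fun i =>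
        isOpen_lt continuous_const (continuous_apply i)
    have hmemU : lam ∈ U := by
      refine ⟨hlam, Set.mem_iInter.2 fun S => ?_⟩
      rcases S.eq_empty_or_nonempty with h | h
      · exact Or.inr (Or.inr h)
      · rcases hyp S h with h' | h'
        · exact Or.inl h'
        · exact Or.inr (Or.inl h')
    have hUsub : U ⊆ coneOfSet (pairTypes rel) := by
      rintro f ⟨hfpos, hfO⟩
      refine mem_cone_of_noDeficient rel hsymm f (fun i => (hfpos i).le) ?_
      intro S hSne
      have := Set.mem_iInter.1 hfO S
      rcases this with h | h | h
      · exact h.le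
      · rw [h]
      · exact absurd h (Finset.nonempty_iff_ne_empty.1 hSne)
    exact mem_interior.2 ⟨U, hUsub, hUopen, hmemU⟩
  · -- frontier part
    rintro ⟨hnodef, S, hSne, hSeq, hSneq⟩
    have H : ∀ S' : Finset (Fin q), S'.Nonempty →
        ∑ i ∈ S', lam i ≤ ∑ i ∈ nbhd rel S', lam i := by
      intro S' hne
      by_contra h
      exact hnodef ⟨S', hne, not_le.1 h⟩
    have hmemC : lam ∈ coneOfSet (pairTypes rel) :=
      mem_cone_of_noDeficient rel hsymm lam (fun i => (hlam i).le) H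
    -- find x ∈ S \ nbhd S
    obtain ⟨x, hxS, hxN⟩ : ∃ x, x ∈ S ∧ x ∉ nbhd rel S := by
      by_contra hno
      push_neg at hno
      have hsub : S ⊆ nbhd rel S := fun z hz => hno z hz
      obtain ⟨z, hzN, hzS⟩ := Finset.exists_of_ssubset ⟨hsub, fun h => hSneq
        (Finset.Subset.antisymm h hsub)⟩
      have := Finset.sum_lt_sum_of_subset hsub hzN hzS (hlam z)
        (fun j _ _ => (hlam j).le)
      linarith [hSeq]
    have hnotint : lam ∉ interior (coneOfSet (pairTypes rel)) := by
      intro hint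
      obtain ⟨ε, hε, hball⟩ := Metric.isOpen_iff.1 isOpen_interior lam hint
      set lam' : Fin q → ℝ := fun i => lam i + if i = x then ε/2 else 0 with hlam'
      have hball' : lam' ∈ Metric.ball lam ε := by
        rw [Metric.mem_ball]
        rw [dist_pi_lt_iff hε]
        intro b
        rw [Real.dist_eq, hlam']
        simp only [add_sub_cancel_left]
        split_ifs
        · rw [abs_of_nonneg (by linarith)]; linarith
        · simpa using hε
      have hmem' : lam' ∈ coneOfSet (pairTypes rel) := interior_subset (hball hball')
      set y0 : Fin q → ℝ := fun k =>
        (if k ∈ nbhd rel S then (1:ℝ) else 0) - (if k ∈ S then 1 else 0) with hy0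
      have hy0edge : ∀ w ∈ pairTypes rel, 0 ≤ ∑ k, w k * y0 k := by
        rintro w ⟨i, j, hrel, rfl⟩
        rw [pair_sum]
        have hiN : i ∈ S → j ∈ nbhd rel S := fun h =>
          mem_filter.2 ⟨mem_univ _, i, h, hsymm i j hrel⟩
        have hjN : j ∈ S → i ∈ nbhd rel S := fun h =>
          mem_filter.2 ⟨mem_univ _, j, h, hrel⟩
        by_cases hiS : i ∈ S <;> by_cases hjS : j ∈ S <;>
          simp only [hy0, hiS, hjS, hiN, hjN, if_true, if_false] <;>
          first
            | (split_ifs <;> norm_num)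
            | norm_num
      have hval : ∑ k, lam' k * y0 k = -(ε/2) := by
        have hsplit : ∀ k, lam' k * y0 k
            = lam k * y0 k + (if k = x then ε/2 else 0) * y0 k := by
          intro k; rw [hlam']; ring
        rw [Finset.sum_congr rfl fun k _ => hsplit k, Finset.sum_add_distrib]
        have h1 : ∑ k, lam k * y0 k = 0 := by
          have : ∀ k, lam k * y0 k
              = (if k ∈ nbhd rel S then lam k else 0) - (if k ∈ S then lam k else 0) := by
            intro k; rw [hy0]
            by_cases h1 : k ∈ nbhd rel S <;> by_cases h2 : k ∈ S <;> simp [h1, h2]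
          rw [Finset.sum_congr rfl fun k _ => this k, Finset.sum_sub_distrib,
            Finset.sum_ite_mem, Finset.sum_ite_mem, univ_inter, univ_inter, hSeq, sub_self]
        have h2 : ∑ k, (if k = x then ε/2 else 0) * y0 k = -(ε/2) := by
          have hh : ∀ k, (if k = x then ε/2 else 0) * y0 k
              = if k = x then ε/2 * y0 k else 0 := by
            intro k; split_ifs <;> ring
          rw [Finset.sum_congr rfl fun k _ => hh k,
            Finset.sum_ite_eq' univ x (fun k => ε/2 * y0 k)]
          simp only [mem_univ, if_true]
          rw [hy0]
          simp [hxS, hxN]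
        rw [h1, h2, zero_add]
      have := coneOfSet_dual_nonneg hy0edge hmem'
      rw [hval] at this
      linarith
    exact ⟨subset_closure hmemC, hnotint⟩
end
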